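/- Let Ω ⊆ ℝ³ be open and let R : Ω → ℝ^{3×3} be differentiable with R(x) ∈ SO(3) for every x ∈ Ω. Then for every x ∈ Ω one has the two-sided pointwise control (1/2)‖(Curl R)(x)‖² ≤ ∑_{i=1}^{3} ‖∂_{x_i}R(x)‖² ≤ 2‖(Curl R)(x)‖². In particular a positive definite quadratic expression in Curl R energetically controls all first derivatives of R and vice versa. -/

import Mathlib

open Matrix

noncomputable section

/-- Partial derivative in the `k`-th coordinate direction of a scalar field on `ℝ³`. -/
def pd (f : (Fin 3 → ℝ) → ℝ) (k : Fin 3) (x : Fin 3 → ℝ) : ℝ :=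
  fderiv ℝ f x (Pi.single k 1)

/-- Entrywise partial derivative `∂_{x_k} R` of a matrix field. -/
def pderivM (R : (Fin 3 → ℝ) → Matrix (Fin 3) (Fin 3) ℝ) (k : Fin 3)
    (x : Fin 3 → ℝ) : Matrix (Fin 3) (Fin 3) ℝ :=
  Matrix.of fun i j => pd (fun y => R y i j) k x

/-- Row-wise Curl of a matrix field: the `i`-th row of `mcurl P x` is the
curl of the `i`-th row of `P` at `x`. -/
def mcurl (P : (Fin 3 → ℝ) → Matrix (Fin 3) (Fin 3) ℝ) (x : Fin 3 → ℝ) :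
    Matrix (Fin 3) (Fin 3) ℝ :=
  Matrix.of fun i =>
    ![pd (fun y => P y i 2) 1 x - pd (fun y => P y i 1) 2 x,
      pd (fun y => P y i 0) 2 x - pd (fun y => P y i 2) 0 x,
      pd (fun y => P y i 1) 0 x - pd (fun y => P y i 0) 1 x]

/-- Squared Frobenius norm `‖X‖² = tr(XᵀX)`. -/
def mnormSq {n : ℕ} (X : Matrix (Fin n) (Fin n) ℝ) : ℝ :=
  Matrix.trace (Xᵀ * X)

lemma mnormSq_eq {n : ℕ} (X : Matrix (Fin n) (Fin n) ℝ) :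
    mnormSq X = ∑ j, ∑ i, (X i j)^2 := by
  simp [mnormSq, Matrix.trace, Matrix.mul_apply, Matrix.diag, sq]

lemma mnormSq_mul_left {n : ℕ} (Q X : Matrix (Fin n) (Fin n) ℝ) (hQ : Qᵀ * Q = 1) :
    mnormSq (Q * X) = mnormSq X := by
  simp only [mnormSq, transpose_mul]
  rw [Matrix.mul_assoc, ← Matrix.mul_assoc Qᵀ Q X, hQ, Matrix.one_mul]

lemma skew_entries (W : Matrix (Fin 3) (Fin 3) ℝ) (h : Wᵀ = -W) :
    W 0 0 = 0 ∧ W 1 1 = 0 ∧ W 2 2 = 0 ∧ W 1 0 = -(W 0 1) ∧ W 2 0 = -(W 0 2) ∧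
      W 2 1 = -(W 1 2) := by
  have h' : ∀ i j, W j i = -(W i j) := fun i j => by
    have := congrFun (congrFun h i) j
    simpa [Matrix.transpose_apply] using this
  refine ⟨by linarith [h' 0 0], by linarith [h' 1 1], by linarith [h' 2 2],
    h' 0 1, h' 0 2, h' 1 2⟩

set_option maxHeartbeats 1000000 in
lemma key_alg (W : Fin 3 → Matrix (Fin 3) (Fin 3) ℝ) (hsk : ∀ k, (W k)ᵀ = -(W k))
    (M : Matrix (Fin 3) (Fin 3) ℝ)
    (hM : ∀ m, M m 0 = W 1 m 2 - W 2 m 1 ∧ M m 1 = W 2 m 0 - W 0 m 2 ∧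
      M m 2 = W 0 m 1 - W 1 m 0) :
    (1 / 2 : ℝ) * mnormSq M ≤ ∑ k : Fin 3, mnormSq (W k) ∧
    ∑ k : Fin 3, mnormSq (W k) ≤ 2 * mnormSq M := by
  obtain ⟨h000, h011, h022, h010, h020, h021⟩ := skew_entries (W 0) (hsk 0)
  obtain ⟨h100, h111, h122, h110, h120, h121⟩ := skew_entries (W 1) (hsk 1)
  obtain ⟨h200, h211, h222, h210, h220, h221⟩ := skew_entries (W 2) (hsk 2)
  obtain ⟨m00, m01, m02⟩ := hM 0
  obtain ⟨m10, m11, m12⟩ := hM 1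
  obtain ⟨m20, m21, m22⟩ := hM 2
  simp only [mnormSq_eq, Fin.sum_univ_three]
  rw [m00, m01, m02, m10, m11, m12, m20, m21, m22]
  rw [h000, h011, h022, h010, h020, h021, h100, h111, h122, h110, h120, h121,
      h200, h211, h222, h210, h220, h221]
  set a0 := W 0 0 1; set b0 := W 0 0 2; set c0 := W 0 1 2
  set a1 := W 1 0 1; set b1 := W 1 0 2; set c1 := W 1 1 2
  set a2 := W 2 0 1; set b2 := W 2 0 2; set c2 := W 2 1 2
  constructor
  · linarith [sq_nonneg (b1 + a2), sq_nonneg (b1 + c0), sq_nonneg (a2 - c0),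
      sq_nonneg a0, sq_nonneg a1, sq_nonneg b0, sq_nonneg b2, sq_nonneg c1, sq_nonneg c2]
  · linarith [sq_nonneg (b1 - a2 - c0)]

theorem stmt_7 (Ω : Set (Fin 3 → ℝ)) (hΩ : IsOpen Ω)
    (R : (Fin 3 → ℝ) → Matrix (Fin 3) (Fin 3) ℝ)
    (hdiff : ∀ i j : Fin 3, DifferentiableOn ℝ (fun y => R y i j) Ω)
    (hSO : ∀ x ∈ Ω, (R x)ᵀ * R x = 1 ∧ (R x).det = 1) :
    ∀ x ∈ Ω,
      (1 / 2 : ℝ) * mnormSq (mcurl R x) ≤ ∑ k : Fin 3, mnormSq (pderivM R k x) ∧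
      ∑ k : Fin 3, mnormSq (pderivM R k x) ≤ 2 * mnormSq (mcurl R x) := by
  intro x hx
  have hnx : Ω ∈ nhds x := hΩ.mem_nhds hx
  have hdA : ∀ m l : Fin 3, DifferentiableAt ℝ (fun y => R y m l) x :=
    fun m l => (hdiff m l).differentiableAt hnx
  set Q := R x with hQdef
  have hQ : Qᵀ * Q = 1 := (hSO x hx).1
  have hQ' : Q * Qᵀ = 1 := mul_eq_one_comm.mp hQ
  -- differentiate the constraint
  have hcon : ∀ i j k : Fin 3,
      ∑ m : Fin 3, (R x m i * pd (fun y => R y m j) k x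
          + R x m j * pd (fun y => R y m i) k x) = 0 := by
    intro i j k
    have hg : (fun y => ∑ m : Fin 3, R y m i * R y m j)
        =ᶠ[nhds x] fun _ => (1 : Matrix (Fin 3) (Fin 3) ℝ) i j := by
      filter_upwards [hnx] with y hy
      have h1 := (hSO y hy).1
      calc ∑ m : Fin 3, R y m i * R y m j = ((R y)ᵀ * R y) i j := by
            simp [Matrix.mul_apply, Matrix.transpose_apply]
        _ = (1 : Matrix (Fin 3) (Fin 3) ℝ) i j := by rw [h1]
    have hz : fderiv ℝ (fun y => ∑ m : Fin 3, R y m i * R y m j) x = 0 := by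
      rw [hg.fderiv_eq]; exact fderiv_const_apply _
    have hs : fderiv ℝ (fun y => ∑ m : Fin 3, R y m i * R y m j) x
        = ∑ m : Fin 3, (R x m i • fderiv ℝ (fun y => R y m j) x
            + R x m j • fderiv ℝ (fun y => R y m i) x) := by
      rw [fderiv_fun_sum (A := fun m y => R y m i * R y m j) (fun m _ => ((hdA m i).mul (hdA m j)))]
      exact Finset.sum_congr rfl fun m _ => fderiv_fun_mul (hdA m i) (hdA m j)
    have := congrArg (fun L => L (Pi.single k 1)) (hz ▸ hs)
    simpa [pd, ContinuousLinearMap.sum_apply] using this.symm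
  set A : Fin 3 → Matrix (Fin 3) (Fin 3) ℝ := fun k => pderivM R k x with hAdef
  set W : Fin 3 → Matrix (Fin 3) (Fin 3) ℝ := fun k => Qᵀ * A k with hWdef
  have hWentry : ∀ k m l : Fin 3, W k m l = ∑ i : Fin 3, Q i m * pd (fun y => R y i l) k x := by
    intro k m l
    simp [hWdef, hAdef, Matrix.mul_apply, pderivM, Matrix.transpose_apply]
  have hskew : ∀ k, (W k)ᵀ = -(W k) := by
    intro k
    ext i j
    have hc := hcon j i k
    have h1 : W k i j = ∑ m : Fin 3, Q m i * pd (fun y => R y m j) k x := hWentry k i j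
    have h2 : W k j i = ∑ m : Fin 3, Q m j * pd (fun y => R y m i) k x := hWentry k j i
    have hsum : (∑ m : Fin 3, Q m j * pd (fun y => R y m i) k x)
        + (∑ m : Fin 3, Q m i * pd (fun y => R y m j) k x) = 0 := by
      rw [← Finset.sum_add_distrib]
      simpa [hQdef] using hc
    simp only [Matrix.transpose_apply, Matrix.neg_apply]
    rw [h2, h1] at *
    linarith [hsum]
  have hAW : ∀ k, A k = Q * W k := by
    intro k
    rw [hWdef]
    rw [← Matrix.mul_assoc, hQ', Matrix.one_mul]
  -- the reduced curl matrix
  set M : Matrix (Fin 3) (Fin 3) ℝ := Qᵀ * mcurl R x with hMdef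
  have hcurl : mcurl R x = Q * M := by
    rw [hMdef, ← Matrix.mul_assoc, hQ', Matrix.one_mul]
  have hMentry : ∀ m : Fin 3, M m 0 = W 1 m 2 - W 2 m 1 ∧ M m 1 = W 2 m 0 - W 0 m 2 ∧
      M m 2 = W 0 m 1 - W 1 m 0 := by
    intro m
    refine ⟨?_, ?_, ?_⟩ <;>
    · simp only [hMdef, Matrix.mul_apply, Matrix.transpose_apply, mcurl, Matrix.of_apply,
        hWentry, Matrix.cons_val_zero, Matrix.cons_val_one, Matrix.head_cons,
        Matrix.cons_val_two, Matrix.tail_cons]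
      rw [← Finset.sum_sub_distrib]
      exact Finset.sum_congr rfl fun i _ => by ring
  have hkey := key_alg W hskew M hMentry
  have e1 : mnormSq (mcurl R x) = mnormSq M := by
    rw [hcurl, mnormSq_mul_left Q M hQ]
  have e2 : ∀ k, mnormSq (A k) = mnormSq (W k) := fun k => by
    rw [hAW k, mnormSq_mul_left Q (W k) hQ]
  constructor
  · rw [e1]
    calc (1/2 : ℝ) * mnormSq M ≤ ∑ k : Fin 3, mnormSq (W k) := hkey.1
      _ = ∑ k : Fin 3, mnormSq (pderivM R k x) := by
          exact Finset.sum_congr rfl fun k _ => (e2 k).symm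
  · rw [e1]
    calc ∑ k : Fin 3, mnormSq (pderivM R k x) = ∑ k : Fin 3, mnormSq (W k) := by
          exact Finset.sum_congr rfl fun k _ => e2 k
      _ ≤ 2 * mnormSq M := hkey.2
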